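/- For all 2 ≤ k < n, there exists an n×n symmetric matrix M with Frobenius norm 1 whose k×k principal submatrices are all PSD and such that dist_F(M, S⁺ₙ) ≥ (n - k)/sqrt((k-1)²·n + n(n-1)). -/

import Mathlib

open Matrix BigOperators Finset

noncomputable def frob {n : ℕ} (A : Matrix (Fin n) (Fin n) ℝ) : ℝ :=
  Real.sqrt (∑ i, ∑ j, (A i j)^2)

noncomputable def distPSD {n : ℕ} (M : Matrix (Fin n) (Fin n) ℝ) : ℝ :=
  sInf {d : ℝ | ∃ N : Matrix (Fin n) (Fin n) ℝ, N.PosSemidef ∧ d = frob (M - N)}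

def kPSD {n : ℕ} (k : ℕ) (M : Matrix (Fin n) (Fin n) ℝ) : Prop :=
  ∀ J : Finset (Fin n), J.card = k →
    (M.submatrix (fun i : {i // i ∈ J} => (i : Fin n))
      (fun i : {i // i ∈ J} => (i : Fin n))).PosSemidef

def kSparse {n : ℕ} (k : ℕ) (x : Fin n → ℝ) : Prop :=
  (Finset.univ.filter (fun i => x i ≠ 0)).card ≤ k

lemma sum_if_aux {m : ℕ} (i : Fin m) (X Y : ℝ) :
    ∑ j : Fin m, (if i = j then X else Y) = X + ((m : ℝ) - 1) * Y := by
  have h : ∀ j : Fin m, (if i = j then X else Y) = (if i = j then X - Y else 0) + Y := by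
    intro j; split <;> ring
  rw [Finset.sum_congr rfl fun j _ => h j, Finset.sum_add_distrib, Finset.sum_ite_eq,
    Finset.sum_const, Finset.card_univ, Fintype.card_fin]
  simp [nsmul_eq_mul]
  ring

theorem stmt10 (n k : ℕ) (hk : 2 ≤ k) (hkn : k < n) :
    ∃ M : Matrix (Fin n) (Fin n) ℝ, M.IsSymm ∧ frob M = 1 ∧ kPSD k M ∧
      ((n : ℝ) - k) / Real.sqrt (((k : ℝ) - 1)^2 * n + n * ((n : ℝ) - 1))
        ≤ distPSD M := by
  set a : ℝ := ((k : ℝ) - 1)^2 * n + n * ((n : ℝ) - 1) with ha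
  have hk1 : (1:ℝ) ≤ (k:ℝ) := by exact_mod_cast Nat.one_le_of_lt hk
  have hknR : (k:ℝ) < (n:ℝ) := by exact_mod_cast hkn
  have hnpos : (0:ℝ) < n := by linarith
  have hapos : 0 < a := by nlinarith [sq_nonneg ((k:ℝ) - 1)]
  set s := Real.sqrt a with hs
  have hspos : 0 < s := Real.sqrt_pos.mpr hapos
  have hs2 : s ^ 2 = a := Real.sq_sqrt hapos.le
  set M : Matrix (Fin n) (Fin n) ℝ :=
    fun i j => (if i = j then ((k:ℝ) - 1) else -1) / s with hM
  have hMapp : ∀ i j, M i j = (if i = j then ((k:ℝ) - 1) else -1) / s := fun i j => rfl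
  refine ⟨M, ?_, ?_, ?_, ?_⟩
  · -- symmetric
    ext i j
    by_cases h : i = j <;> simp [Matrix.transpose_apply, hMapp, h, eq_comm]
  · -- frobenius norm 1
    have hinner : ∀ i, ∑ j, (M i j)^2 = ((k:ℝ)-1)^2/s^2 + ((n:ℝ)-1) * (1/s^2) := by
      intro i
      have hpt : ∀ j, (M i j)^2 = if i = j then ((k:ℝ)-1)^2/s^2 else 1/s^2 := by
        intro j; rw [hMapp]; split <;> ring
      rw [Finset.sum_congr rfl fun j _ => hpt j, sum_if_aux]
    have htot : ∑ i, ∑ j, (M i j)^2 = 1 := by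
      rw [Finset.sum_congr rfl fun i _ => hinner i, Finset.sum_const, Finset.card_univ,
        Fintype.card_fin, nsmul_eq_mul]
      have hane : a ≠ 0 := hapos.ne'
      rw [hs2]
      field_simp
      rw [ha]; ring
    rw [frob, htot, Real.sqrt_one]
  · -- kPSD
    intro J hJ
    set A := M.submatrix (fun i : {i // i ∈ J} => (i : Fin n))
      (fun i : {i // i ∈ J} => (i : Fin n)) with hA
    have hAapp : ∀ x y : {i // i ∈ J},
        A x y = (if x = y then ((k:ℝ) - 1) else -1) / s := by
      intro x y
      rw [hA, Matrix.submatrix_apply, hMapp]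
      congr 1
      simp [Subtype.coe_inj]
    have hcard : (Fintype.card {i // i ∈ J} : ℝ) = (k:ℝ) := by
      rw [Fintype.card_coe, hJ]
    refine Matrix.PosSemidef.of_dotProduct_mulVec_nonneg ?_ ?_
    · ext x y
      by_cases h : x = y <;> simp [Matrix.conjTranspose_apply, hAapp, h, eq_comm]
    · intro x
      have hquad : star x ⬝ᵥ A *ᵥ x = ∑ i, x i * ∑ j, A i j * x j := by
        simp [dotProduct, Matrix.mulVec]
      have hpt : ∀ i j, x i * (A i j * x j) * s
          = (if i = j then (k:ℝ) * (x i * x j) else 0) - x i * x j := by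
        intro i j
        rw [hAapp]
        split <;> field_simp <;> ring
      have key : (∑ i, x i * ∑ j, A i j * x j) * s
          = (k:ℝ) * (∑ i, x i ^ 2) - (∑ i, x i)^2 := by
        rw [Finset.sum_mul]
        have : ∀ i ∈ Finset.univ, (x i * ∑ j, A i j * x j) * s
            = ∑ j, ((if i = j then (k:ℝ) * (x i * x j) else 0) - x i * x j) := by
          intro i _
          rw [Finset.mul_sum, Finset.sum_mul]
          exact Finset.sum_congr rfl fun j _ => hpt i j
        rw [Finset.sum_congr rfl this]
        simp only [Finset.sum_sub_distrib, Finset.sum_ite_eq, Finset.mem_univ, if_true]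
        congr 1
        · rw [Finset.mul_sum]; exact Finset.sum_congr rfl fun i _ => by ring
        · rw [sq, Finset.sum_mul]
          exact Finset.sum_congr rfl fun i _ => (Finset.mul_sum _ _ _).symm
      have hCS : (∑ i, x i)^2 ≤ (k:ℝ) * ∑ i, x i ^ 2 := by
        have h := Finset.sum_mul_sq_le_sq_mul_sq Finset.univ x (fun _ => (1:ℝ))
        simp only [mul_one, one_pow, Finset.sum_const, Finset.card_univ, nsmul_eq_mul,
          mul_one] at h
        rw [Fintype.card_coe, hJ, mul_comm] at h
        exact h
      have hT : 0 ≤ (∑ i, x i * ∑ j, A i j * x j) * s := by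
        rw [key]; linarith
      rw [hquad]
      by_contra hneg
      push_neg at hneg
      nlinarith [hT, hspos]
  · -- distance bound
    refine le_csInf ⟨frob (M - 0), 0, Matrix.PosSemidef.zero, rfl⟩ ?_
    rintro d ⟨N, hN, rfl⟩
    have hMsum : ∑ i, ∑ j, M i j = ((k:ℝ) - n) * n / s := by
      have hinner : ∀ i : Fin n, ∑ j, M i j = ((k:ℝ) - n) / s := by
        intro i
        have hpt : ∀ j, M i j = if i = j then ((k:ℝ)-1)/s else (-1)/s := by
          intro j; rw [hMapp]; split <;> ring
        rw [Finset.sum_congr rfl fun j _ => hpt j, sum_if_aux]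
        ring
      rw [Finset.sum_congr rfl fun i _ => hinner i, Finset.sum_const, Finset.card_univ,
        Fintype.card_fin, nsmul_eq_mul]
      ring
    have hNsum : 0 ≤ ∑ i, ∑ j, N i j := by
      have h := hN.dotProduct_mulVec_nonneg (fun _ => (1:ℝ))
      simpa [dotProduct, Matrix.mulVec] using h
    set S := ∑ i, ∑ j, (M - N) i j with hS
    have hSval : S = (∑ i, ∑ j, M i j) - ∑ i, ∑ j, N i j := by
      rw [hS]
      simp [Matrix.sub_apply, Finset.sum_sub_distrib]
    have hSle : S ≤ ((k:ℝ) - n) * n / s := by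
      rw [hSval, hMsum]; linarith
    have hCS : S^2 ≤ (∑ i, ∑ j, ((M - N) i j)^2) * (n:ℝ)^2 := by
      have h := Finset.sum_mul_sq_le_sq_mul_sq Finset.univ
        (fun p : Fin n × Fin n => (M - N) p.1 p.2) (fun _ => (1:ℝ))
      simp only [mul_one, one_pow, Finset.sum_const, Finset.card_univ, nsmul_eq_mul,
        Fintype.card_prod, Fintype.card_fin, Fintype.sum_prod_type] at h
      push_cast at h
      rw [hS, pow_two ((n:ℝ) : ℝ)]
      exact h
    have h1 : ((n:ℝ) - k) * n / s ≤ -S := by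
      have : -(((k:ℝ) - n) * n / s) = ((n:ℝ) - k) * n / s := by ring
      linarith
    have hnegS : 0 ≤ -S := by
      refine le_trans ?_ h1
      have : (0:ℝ) ≤ ((n:ℝ) - k) * n := by nlinarith
      positivity
    have hsum2 : (0:ℝ) ≤ ∑ i, ∑ j, ((M - N) i j)^2 :=
      Finset.sum_nonneg fun i _ => Finset.sum_nonneg fun j _ => sq_nonneg _
    have h3 : -S ≤ frob (M - N) * n := by
      have e1 : -S = Real.sqrt ((-S)^2) := (Real.sqrt_sq hnegS).symm
      rw [e1]
      have h2 : (-S)^2 ≤ (∑ i, ∑ j, ((M - N) i j)^2) * (n:ℝ)^2 := by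
        rw [neg_pow]; simpa using hCS
      calc Real.sqrt ((-S)^2) ≤ Real.sqrt ((∑ i, ∑ j, ((M - N) i j)^2) * (n:ℝ)^2) :=
            Real.sqrt_le_sqrt h2
        _ = frob (M - N) * n := by
            rw [Real.sqrt_mul hsum2, Real.sqrt_sq hnpos.le, frob]
    have h4 : ((n:ℝ) - k) / s * n ≤ frob (M - N) * n := by
      have : ((n:ℝ) - k) * n / s = ((n:ℝ) - k) / s * n := by ring
      linarith
    exact le_of_mul_le_mul_right h4 hnpos
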